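/- Let (Ω, 𝒫) be a probability space, let k be an odd positive natural number, let α be a real number with 1/2 < α ≤ 1, and let X_1, …, X_k : Ω → {0, 1} be mutually independent random variables with 𝒫(X_j = 1) = α for every j. Then 𝒫( ∑_{j=1}^k X_j > k/2 ) ≥ α. -/

import Mathlib

open MeasureTheory ProbabilityTheory

/-- The key real-valued inequality: the sum of the weights `α^|t| (1-α)^(k-|t|)` over
subsets `t` of `Fin k` of cardinality more than `k/2` is at least `α`, for `k` odd. -/
lemma majority_weight_sum_ge (k : ℕ) (hk : Odd k) (α : ℝ) (hα : 1 / 2 < α) (hα1 : α ≤ 1) :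
    α ≤ ∑ t ∈ Finset.univ.filter (fun t : Finset (Fin k) => k < 2 * t.card),
        α ^ t.card * (1 - α) ^ (k - t.card) := by
  set β := 1 - α with hβ
  have hα0 : 0 ≤ α := by linarith
  have hβ0 : 0 ≤ β := by simp [hβ]; linarith
  have hβα : β ≤ α := by simp [hβ]; linarith
  have hw0 : ∀ t : Finset (Fin k), 0 ≤ α ^ t.card * β ^ (k - t.card) := fun t =>
    mul_nonneg (pow_nonneg hα0 _) (pow_nonneg hβ0 _)
  -- total sum of weights is 1
  have htot : ∑ t : Finset (Fin k), α ^ t.card * β ^ (k - t.card) = 1 := by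
    have h := Finset.prod_add (fun _ : Fin k => α) (fun _ : Fin k => β) Finset.univ
    simp only [Finset.prod_const, Finset.powerset_univ] at h
    have h2 : ∀ t : Finset (Fin k), (Finset.univ \ t).card = k - t.card := by
      intro t
      rw [Finset.sdiff_eq_inter_compl, Finset.univ_inter, Finset.card_compl]
      simp
    calc ∑ t : Finset (Fin k), α ^ t.card * β ^ (k - t.card)
        = ∑ t : Finset (Fin k), α ^ t.card * β ^ (Finset.univ \ t).card := by
          refine Finset.sum_congr rfl fun t _ => by rw [h2]
      _ = (α + β) ^ (Finset.univ : Finset (Fin k)).card := h.symm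
      _ = 1 := by simp [hβ]
  -- split the total into the majority part and the rest
  set P : Finset (Fin k) → Prop := fun t => k < 2 * t.card with hP
  have hsplit := Finset.sum_filter_add_sum_filter_not Finset.univ P
      (fun t : Finset (Fin k) => α ^ t.card * β ^ (k - t.card))
  set S := ∑ t ∈ Finset.univ.filter P, α ^ t.card * β ^ (k - t.card) with hS
  set N := ∑ t ∈ Finset.univ.filter (fun t => ¬ P t),
      α ^ t.card * β ^ (k - t.card) with hN
  have hSN : S + N = 1 := by rw [hS, hN, hsplit, htot]
  -- suffices: α * N ≤ β * S
  have key : α * N ≤ β * S := by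
    -- rewrite N as a sum over the majority sets via complementation
    have hNbij : N = ∑ t ∈ Finset.univ.filter P, α ^ (k - t.card) * β ^ t.card := by
      rw [hN]
      refine Finset.sum_nbij' (fun t => tᶜ) (fun t => tᶜ) ?_ ?_ ?_ ?_ ?_
      · intro t ht
        simp only [Finset.mem_filter, Finset.mem_univ, true_and, hP] at ht ⊢
        rw [Finset.card_compl, Fintype.card_fin]
        obtain ⟨m, hm⟩ := hk
        omega
      · intro t ht
        simp only [Finset.mem_filter, Finset.mem_univ, true_and, hP] at ht ⊢
        rw [Finset.card_compl, Fintype.card_fin]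
        have := Finset.card_le_univ t
        simp only [Finset.card_univ, Fintype.card_fin] at this
        obtain ⟨m, hm⟩ := hk
        omega
      · intro t _; simp
      · intro t _; simp
      · intro t ht
        simp only [Finset.mem_filter, Finset.mem_univ, true_and, hP] at ht
        have hle : t.card ≤ k := by
          have := Finset.card_le_univ t
          simpa using this
        rw [Finset.card_compl, Fintype.card_fin,
          show k - (k - t.card) = t.card from by omega]
    rw [hNbij, Finset.mul_sum, Finset.mul_sum]
    refine Finset.sum_le_sum fun t ht => ?_
    simp only [Finset.mem_filter, Finset.mem_univ, true_and, hP] at ht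
    have hle : t.card ≤ k := by
      have := Finset.card_le_univ t
      simpa using this
    set s := t.card with hs
    obtain ⟨a, d, ha, hsd⟩ : ∃ a d, k - s = a ∧ s = a + 1 + d :=
      ⟨k - s, s - (k - s + 1), rfl, by omega⟩
    rw [ha, hsd]
    calc α * (α ^ a * β ^ (a + 1 + d))
        = (α ^ (a + 1) * β ^ (a + 1)) * β ^ d := by ring
      _ ≤ (α ^ (a + 1) * β ^ (a + 1)) * α ^ d := by
          refine mul_le_mul_of_nonneg_left (pow_le_pow_left₀ hβ0 hβα d) ?_
          exact mul_nonneg (pow_nonneg hα0 _) (pow_nonneg hβ0 _)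
      _ = β * (α ^ (a + 1 + d) * β ^ a) := by ring
  -- conclude
  have hN0 : 0 ≤ N := Finset.sum_nonneg fun t _ => hw0 t
  nlinarith [key, hSN]

/-- Condorcet's Jury Theorem: if `k` is odd and `X₁, …, X_k` are mutually independent
`{0,1}`-valued random variables, each equal to `1` with probability `α > 1/2`, then the
probability that more than `k/2` of them equal `1` is at least `α`. -/
theorem majority_vote_correct_prob_ge {Ω : Type*} [MeasureSpace Ω]
    [IsProbabilityMeasure (ℙ : Measure Ω)]
    (k : ℕ) (hk : Odd k) (hkpos : 0 < k)
    (α : ℝ) (hα : 1 / 2 < α) (hα1 : α ≤ 1)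
    (X : Fin k → Ω → ℕ) (hXmeas : ∀ j, Measurable (X j))
    (hXval : ∀ j ω, X j ω = 0 ∨ X j ω = 1)
    (hindep : iIndepFun X ℙ)
    (hprob : ∀ j, ℙ {ω | X j ω = 1} = ENNReal.ofReal α) :
    ℙ {ω | (k : ℝ) / 2 < (∑ j, X j ω : ℕ)} ≥ ENNReal.ofReal α := by
  have hα0 : 0 ≤ α := by linarith
  set β := 1 - α with hβ
  have hβ0 : 0 ≤ β := by simp [hβ]; linarith
  -- the probability of `X j = 0`
  have hprob0 : ∀ j, ℙ (X j ⁻¹' {0}) = ENNReal.ofReal β := by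
    intro j
    have hcompl : X j ⁻¹' {0} = (X j ⁻¹' {1})ᶜ := by
      ext ω
      simp only [Set.mem_preimage, Set.mem_singleton_iff, Set.mem_compl_iff]
      rcases hXval j ω with h | h <;> simp [h]
    have hm1 : MeasurableSet (X j ⁻¹' {1}) := hXmeas j (measurableSet_singleton 1)
    have h1 : ℙ (X j ⁻¹' {1}) = ENNReal.ofReal α := hprob j
    rw [hcompl, measure_compl hm1 (measure_ne_top _ _), h1, measure_univ]
    rw [hβ, ENNReal.ofReal_sub 1 hα0, ENNReal.ofReal_one]
  -- the atomic events
  classical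
  set E : Finset (Fin k) → Set Ω :=
    fun t => ⋂ j, X j ⁻¹' {if j ∈ t then 1 else 0} with hE
  have hEmeas : ∀ t, MeasurableSet (E t) := fun t =>
    MeasurableSet.iInter fun j => hXmeas j (measurableSet_singleton _)
  -- the event is the union of the atomic events over majority sets
  set F : Finset (Finset (Fin k)) :=
    Finset.univ.filter (fun t : Finset (Fin k) => k < 2 * t.card) with hF
  have hcast : ∀ n : ℕ, ((k : ℝ) / 2 < (n : ℝ)) ↔ k < 2 * n := by
    intro n
    rw [div_lt_iff₀ (by norm_num : (0:ℝ) < 2)]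
    rw [show (2:ℝ) = ((2:ℕ):ℝ) by norm_cast, ← Nat.cast_mul, Nat.cast_lt]
    omega
  have hsum_card : ∀ (ω : Ω) (t : Finset (Fin k)),
      (∀ j, X j ω = if j ∈ t then 1 else 0) → ∑ j, X j ω = t.card := by
    intro ω t h
    calc ∑ j, X j ω = ∑ j, if j ∈ t then 1 else 0 :=
          Finset.sum_congr rfl fun j _ => h j
      _ = t.card := by simp
  have hevent : {ω | (k : ℝ) / 2 < (∑ j, X j ω : ℕ)} = ⋃ t ∈ F, E t := by
    ext ω
    simp only [Set.mem_setOf_eq, Set.mem_iUnion, hF, Finset.mem_filter,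
      Finset.mem_univ, true_and, hE, Set.mem_iInter, Set.mem_preimage,
      Set.mem_singleton_iff, exists_prop]
    rw [hcast]
    constructor
    · intro h
      refine ⟨Finset.univ.filter (fun j => X j ω = 1), ?_, ?_⟩
      · have : ∑ j, X j ω = (Finset.univ.filter (fun j => X j ω = 1)).card := by
          apply hsum_card
          intro j
          rcases hXval j ω with h | h <;> simp [Finset.mem_filter, h]
        omega
      · intro j
        rcases hXval j ω with h | h <;> simp [Finset.mem_filter, h]
    · rintro ⟨t, ht, hmem⟩
      have := hsum_card ω t hmem
      omega
  rw [hevent]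
  -- disjointness of the atomic events
  have hdisj : (↑F : Set (Finset (Fin k))).PairwiseDisjoint E := by
    intro t _ t' _ hne
    rw [Function.onFun, Set.disjoint_left]
    intro ω hωt hωt'
    simp only [hE, Set.mem_iInter, Set.mem_preimage, Set.mem_singleton_iff] at hωt hωt'
    apply hne
    ext j
    have h1 := hωt j
    have h2 := hωt' j
    by_cases hjt : j ∈ t <;> by_cases hjt' : j ∈ t' <;> simp_all
  rw [measure_biUnion_finset hdisj fun t _ => hEmeas t]
  -- compute the measure of each atomic event
  have hatom : ∀ t : Finset (Fin k),
      ℙ (E t) = ENNReal.ofReal (α ^ t.card * β ^ (k - t.card)) := by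
    intro t
    have := hindep.meas_iInter (s := fun j => X j ⁻¹' {if j ∈ t then 1 else 0})
      (fun j => ⟨{if j ∈ t then 1 else 0}, trivial, rfl⟩)
    rw [hE, this]
    have hval : ∀ j, ℙ (X j ⁻¹' {if j ∈ t then 1 else 0}) =
        if j ∈ t then ENNReal.ofReal α else ENNReal.ofReal β := by
      intro j
      by_cases hj : j ∈ t
      · simp only [hj, if_true]
        have : X j ⁻¹' {1} = {ω | X j ω = 1} := rfl
        rw [this, hprob j]
      · simp only [hj, if_false]
        exact hprob0 j
    calc ∏ j, ℙ (X j ⁻¹' {if j ∈ t then 1 else 0})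
        = ∏ j, if j ∈ t then ENNReal.ofReal α else ENNReal.ofReal β :=
          Finset.prod_congr rfl fun j _ => hval j
      _ = ENNReal.ofReal α ^ t.card * ENNReal.ofReal β ^ (k - t.card) := by
          rw [Finset.prod_ite, Finset.prod_const, Finset.prod_const]
          have h1 : Finset.univ.filter (fun j => j ∈ t) = t := by
            ext j; simp
          have h2 : (Finset.univ.filter (fun j : Fin k => ¬ j ∈ t)).card = k - t.card := by
            have : Finset.univ.filter (fun j : Fin k => ¬ j ∈ t) = tᶜ := by
              ext j; simp
            rw [this, Finset.card_compl, Fintype.card_fin]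
          rw [h1, h2]
      _ = ENNReal.ofReal (α ^ t.card * β ^ (k - t.card)) := by
          rw [ENNReal.ofReal_mul (pow_nonneg hα0 _), ENNReal.ofReal_pow hα0,
            ENNReal.ofReal_pow hβ0]
  calc ENNReal.ofReal α
      ≤ ENNReal.ofReal (∑ t ∈ F, α ^ t.card * β ^ (k - t.card)) :=
        ENNReal.ofReal_le_ofReal (majority_weight_sum_ge k hk α hα hα1)
    _ = ∑ t ∈ F, ENNReal.ofReal (α ^ t.card * β ^ (k - t.card)) :=
        ENNReal.ofReal_sum_of_nonneg fun t _ =>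
          mul_nonneg (pow_nonneg hα0 _) (pow_nonneg hβ0 _)
    _ = ∑ t ∈ F, ℙ (E t) := Finset.sum_congr rfl fun t _ => (hatom t).symm
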